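/- Let Γ be a finite set, D_γ finite sets for γ ∈ Γ, and H_{γ,γ'} nonempty sets of bijections D_γ → D_{γ'} satisfying H_{γ,γ'} ∘ H_{γ',γ''} = H_{γ,γ''}. Let D = {(γ, δ) : γ ∈ Γ, δ ∈ D_γ} and let K be a subgroup of Sym(Γ). For g ∈ K and a system F = (f_{γ,γ^g})_{γ∈Γ} with f_{γ,γ^g} ∈ H_{γ,γ^g}, define f_F : D → D by (γ,δ) ↦ (γ^g, δ^{f_{γ,γ^g}}). Then the set W of all such f_F (over all g ∈ K and all systems F) is a subgroup of Sym(D). -/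

import Mathlib

/-- With nonempty composing sets of bijections `H γ γ'` and `K ≤ Sym(Γ)`,
the set `W` of all maps `f_F : (γ, δ) ↦ (γ^g, δ^{f_{γ,γ^g}})` is a subgroup
of the symmetric group on `D = {(γ, δ) : δ ∈ D γ}`. -/
theorem stmt7 {Γ : Type*} [Finite Γ] (D : Γ → Type*) [∀ γ, Finite (D γ)]
    (H : ∀ γ γ' : Γ, Set (D γ ≃ D γ'))
    (hne : ∀ γ γ', (H γ γ').Nonempty)
    (hcomp : ∀ γ γ' γ'' : Γ,
      {e : D γ ≃ D γ'' | ∃ ψ ∈ H γ γ', ∃ ρ ∈ H γ' γ'', e = ψ.trans ρ} = H γ γ'')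
    (K : Subgroup (Equiv.Perm Γ)) :
    ∃ S : Subgroup (Equiv.Perm (Σ γ, D γ)),
      ∀ w : Equiv.Perm (Σ γ, D γ),
        w ∈ S ↔ ∃ g ∈ K, ∃ F : ∀ γ, D γ ≃ D (g γ),
          (∀ γ, F γ ∈ H γ (g γ)) ∧ ∀ (γ : Γ) (δ : D γ), w ⟨γ, δ⟩ = ⟨g γ, F γ δ⟩ := by
  classical
  have trans_mem : ∀ {γ γ' γ''} {ψ : D γ ≃ D γ'} {ρ : D γ' ≃ D γ''},
      ψ ∈ H γ γ' → ρ ∈ H γ' γ'' → ψ.trans ρ ∈ H γ γ'' := by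
    intro γ γ' γ'' ψ ρ hψ hρ
    rw [← hcomp γ γ' γ'']
    exact ⟨ψ, hψ, ρ, hρ, rfl⟩
  have pow_mem : ∀ {γ} (ψ : Equiv.Perm (D γ)), ψ ∈ H γ γ → ∀ n, ψ ^ (n + 1) ∈ H γ γ := by
    intro γ ψ hψ n
    induction n with
    | zero => simpa using hψ
    | succ k ih =>
        have h : ψ ^ (k + 2) = Equiv.trans (ψ ^ (k + 1)) ψ := by
          ext x
          simp [pow_succ']
        rw [h]
        exact trans_mem ih hψ
  have id_mem : ∀ γ, Equiv.refl (D γ) ∈ H γ γ := by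
    intro γ
    obtain ⟨ψ, hψ⟩ := hne γ γ
    have hn : 0 < orderOf ψ := orderOf_pos ψ
    have h1 : ψ ^ orderOf ψ = 1 := pow_orderOf_eq_one ψ
    have h2 : ψ ^ (orderOf ψ - 1 + 1) = ψ ^ orderOf ψ := by
      congr 1
      omega
    have := pow_mem ψ hψ (orderOf ψ - 1)
    rw [h2, h1] at this
    exact this
  have inv_mem_diag : ∀ {γ} (ψ : Equiv.Perm (D γ)), ψ ∈ H γ γ → ψ⁻¹ ∈ H γ γ := by
    intro γ ψ hψ
    have hn : 0 < orderOf ψ := orderOf_pos ψ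
    have h1 : ψ * ψ ^ (2 * orderOf ψ - 1) = 1 := by
      rw [← pow_succ']
      have : 2 * orderOf ψ - 1 + 1 = orderOf ψ + orderOf ψ := by omega
      rw [this, pow_add, pow_orderOf_eq_one, one_mul]
    have h2 : ψ⁻¹ = ψ ^ (2 * orderOf ψ - 1) := inv_eq_of_mul_eq_one_right h1
    have h3 : 2 * orderOf ψ - 1 = (2 * orderOf ψ - 2) + 1 := by omega
    rw [h2, h3]
    exact pow_mem ψ hψ _
  have symm_mem : ∀ {γ γ'} (ψ : D γ ≃ D γ'), ψ ∈ H γ γ' → ψ.symm ∈ H γ' γ := by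
    intro γ γ' ψ hψ
    obtain ⟨ρ, hρ⟩ := hne γ' γ
    have ht : ψ.trans ρ ∈ H γ γ := trans_mem hψ hρ
    have hinv : (ψ.trans ρ)⁻¹ ∈ H γ γ := inv_mem_diag _ ht
    have : ψ.symm = ρ.trans (ψ.trans ρ)⁻¹ := by
      ext x
      simp [Equiv.Perm.inv_def]
    rw [this]
    exact trans_mem hρ hinv
  have cast_mem : ∀ {a b c : Γ} (h : a = b) (e : D a ≃ D c), e ∈ H a c →
      ((Equiv.cast (congrArg D h)).symm.trans e) ∈ H b c := by
    intro a b c h e he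
    subst h
    simpa using he
  refine ⟨{
    carrier := {w | ∃ g ∈ K, ∃ F : ∀ γ, D γ ≃ D (g γ),
      (∀ γ, F γ ∈ H γ (g γ)) ∧ ∀ (γ : Γ) (δ : D γ), w ⟨γ, δ⟩ = ⟨g γ, F γ δ⟩}
    one_mem' := ?_
    mul_mem' := ?_
    inv_mem' := ?_ }, fun w => Iff.rfl⟩
  · rintro w₁ w₂ ⟨g₁, hg₁, F₁, hF₁, hw₁⟩ ⟨g₂, hg₂, F₂, hF₂, hw₂⟩
    refine ⟨g₁ * g₂, K.mul_mem hg₁ hg₂, fun γ => (F₂ γ).trans (F₁ (g₂ γ)),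
      fun γ => trans_mem (hF₂ γ) (hF₁ (g₂ γ)), fun γ δ => ?_⟩
    show w₁ (w₂ ⟨γ, δ⟩) = _
    rw [hw₂, hw₁]
    rfl
  · exact ⟨1, K.one_mem, fun γ => Equiv.refl (D γ), fun γ => id_mem γ, fun γ δ => rfl⟩
  · rintro w ⟨g, hg, F, hF, hw⟩
    refine ⟨g⁻¹, K.inv_mem hg, fun γ' =>
      (Equiv.cast (congrArg D (g.apply_symm_apply γ'))).symm.trans (F (g⁻¹ γ')).symm,
      fun γ' => cast_mem (g.apply_symm_apply γ') _ (symm_mem _ (hF (g⁻¹ γ'))), fun γ' δ' => ?_⟩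
    rw [Equiv.Perm.inv_def, Equiv.symm_apply_eq, hw]
    refine Sigma.ext (g.apply_symm_apply γ').symm ?_
    simp only [Equiv.trans_apply]
    have h1 : HEq δ' ((Equiv.cast (congrArg D (g.apply_symm_apply γ'))).symm δ') := by
      rw [← Equiv.cast_symm, Equiv.cast_apply]
      exact (cast_heq _ _).symm
    exact h1.trans (heq_of_eq (Equiv.apply_symm_apply _ _).symm)
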